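/- Let K = {x ∈ ℝⁿ : gⱼ(x) ≥ 0 for j = 1,…,m} with gⱼ real polynomials. Suppose for every j there exist functions σⱼ, hⱼ : ℝⁿ × ℝⁿ → ℝ that are nonnegative on K × K, and an integer pⱼ ≥ 1, such that σⱼ(x,y)·gⱼ((x+y)/2) = gⱼ((x+y)/2)^(2pⱼ) + hⱼ(x,y) for all x, y ∈ ℝⁿ. Then K is convex. -/

import Mathlib

/-- A closed, midpoint-closed set in a real normed space is convex. -/
lemma isClosed_midpoint_convex {E : Type*} [NormedAddCommGroup E] [NormedSpace ℝ E]
    (K : Set E) (hcl : IsClosed K)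
    (hmid : ∀ x ∈ K, ∀ y ∈ K, (1/2 : ℝ) • (x + y) ∈ K) : Convex ℝ K := by
  intro x hx y hy a b ha hb hab
  set f : ℝ → E := fun t => x + t • (y - x) with hf_def
  have hf : Continuous f := by fun_prop
  have key : ∀ N : ℕ, ∀ k : ℕ, k ≤ 2 ^ N → f ((k : ℝ) / 2 ^ N) ∈ K := by
    intro N
    induction N with
    | zero =>
      intro k hk
      interval_cases k
      · simpa [hf_def] using hx
      · simpa [hf_def] using hy
    | succ N ih =>
      intro k hk
      have h1 : k / 2 ≤ 2 ^ N := by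
        have : 2 ^ (N + 1) = 2 * 2 ^ N := by ring
        omega
      have h2 : (k + 1) / 2 ≤ 2 ^ N := by
        have : 2 ^ (N + 1) = 2 * 2 ^ N := by ring
        omega
      have hm := hmid _ (ih _ h1) _ (ih _ h2)
      have hsum : (↑(k / 2) : ℝ) + ↑((k + 1) / 2) = (k : ℝ) := by
        have : k / 2 + (k + 1) / 2 = k := by omega
        exact_mod_cast congrArg (Nat.cast : ℕ → ℝ) this
      have heq : (1/2 : ℝ) • (f ((↑(k / 2) : ℝ) / 2 ^ N) + f ((↑((k + 1) / 2) : ℝ) / 2 ^ N))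
          = f ((k : ℝ) / 2 ^ (N + 1)) := by
        simp only [hf_def]
        have h2N : (2 : ℝ) ^ N ≠ 0 := by positivity
        rw [show ((k : ℝ) / 2 ^ (N + 1)) = ((↑(k / 2) : ℝ) / 2 ^ N + (↑((k + 1) / 2) : ℝ) / 2 ^ N) / 2 by
          rw [← add_div, hsum, pow_succ]; ring]
        match_scalars <;> ring
      rw [heq] at hm
      exact hm
  -- approximate b by dyadic rationals
  have hb1 : b ≤ 1 := by linarith
  set d : ℕ → ℝ := fun N => (⌊b * 2 ^ N⌋₊ : ℝ) / 2 ^ N with hd_def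
  have hdmem : ∀ N, f (d N) ∈ K := by
    intro N
    apply key
    have : (b * 2 ^ N) ≤ ((2 ^ N : ℕ) : ℝ) := by
      push_cast
      nlinarith [pow_pos (by norm_num : (0:ℝ) < 2) N]
    calc ⌊b * 2 ^ N⌋₊ ≤ ⌊((2 ^ N : ℕ) : ℝ)⌋₊ := Nat.floor_le_floor this
      _ = 2 ^ N := Nat.floor_natCast _
  have hdtend : Filter.Tendsto d Filter.atTop (nhds b) := by
    have hbound : ∀ N, |d N - b| ≤ (1/2 : ℝ) ^ N := by
      intro N
      have hpos : (0:ℝ) < 2 ^ N := by positivity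
      have hfl : (⌊b * 2 ^ N⌋₊ : ℝ) ≤ b * 2 ^ N := Nat.floor_le (by positivity)
      have hfl2 : b * 2 ^ N ≤ (⌊b * 2 ^ N⌋₊ : ℝ) + 1 := le_of_lt (Nat.lt_floor_add_one _)
      rw [abs_le]
      constructor
      · rw [hd_def]
        have : b - 1 / 2 ^ N ≤ (⌊b * 2 ^ N⌋₊ : ℝ) / 2 ^ N := by
          rw [le_div_iff₀ hpos]
          have h1 : (1 / 2 ^ N : ℝ) * 2 ^ N = 1 := by field_simp
          nlinarith [hfl2]
        simp only
        rw [div_pow, one_pow]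
        linarith
      · rw [hd_def]
        simp only
        rw [div_pow, one_pow]
        have : (⌊b * 2 ^ N⌋₊ : ℝ) / 2 ^ N ≤ b := by
          rw [div_le_iff₀ hpos]; linarith
        have h0 : (0:ℝ) ≤ 1 / 2 ^ N := by positivity
        linarith
    have h0 : Filter.Tendsto (fun N => (1/2 : ℝ) ^ N) Filter.atTop (nhds 0) :=
      tendsto_pow_atTop_nhds_zero_of_lt_one (by norm_num) (by norm_num)
    rw [tendsto_iff_dist_tendsto_zero]
    apply squeeze_zero (fun N => dist_nonneg) (fun N => by simpa [Real.dist_eq] using hbound N) h0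
  have hftend : Filter.Tendsto (fun N => f (d N)) Filter.atTop (nhds (f b)) :=
    (hf.tendsto b).comp hdtend
  have hfb : f b ∈ K := hcl.mem_of_tendsto hftend (Filter.Eventually.of_forall hdmem)
  have : f b = a • x + b • y := by
    simp only [hf_def, smul_sub]
    have : a = 1 - b := by linarith
    rw [this]
    module
  rwa [this] at hfb

theorem certificate_of_convexity (n m : ℕ) (g : Fin m → MvPolynomial (Fin n) ℝ)
    (K : Set (Fin n → ℝ)) (hK : K = {x | ∀ j, 0 ≤ MvPolynomial.eval x (g j)})
    (hcert : ∀ j : Fin m, ∃ (σ h : (Fin n → ℝ) → (Fin n → ℝ) → ℝ) (p : ℕ), 1 ≤ p ∧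
      (∀ x ∈ K, ∀ y ∈ K, 0 ≤ σ x y ∧ 0 ≤ h x y) ∧
      (∀ x y : Fin n → ℝ,
        σ x y * MvPolynomial.eval ((1/2 : ℝ) • (x + y)) (g j) =
          (MvPolynomial.eval ((1/2 : ℝ) • (x + y)) (g j)) ^ (2 * p) + h x y)) :
    Convex ℝ K := by
  apply isClosed_midpoint_convex
  · rw [hK]
    have : {x : Fin n → ℝ | ∀ j, 0 ≤ MvPolynomial.eval x (g j)}
        = ⋂ j, (fun x => MvPolynomial.eval x (g j)) ⁻¹' Set.Ici 0 := by
      ext x; simp [Set.mem_iInter]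
    rw [this]
    exact isClosed_iInter fun j =>
      IsClosed.preimage (MvPolynomial.continuous_eval _) isClosed_Ici
  · intro x hx y hy
    rw [hK]
    intro j
    obtain ⟨σ, h, p, hp, hnn, heq⟩ := hcert j
    obtain ⟨hσ, hh⟩ := hnn x hx y hy
    by_contra hneg
    push_neg at hneg
    set G := MvPolynomial.eval ((1/2 : ℝ) • (x + y)) (g j) with hG
    have hGne : G ≠ 0 := ne_of_lt hneg
    have hpow : 0 < G ^ (2 * p) := by
      rw [pow_mul]; exact pow_pos (pow_two_pos_of_ne_zero hGne) p
    have hlhs : σ x y * G ≤ 0 := mul_nonpos_of_nonneg_of_nonpos hσ (le_of_lt hneg)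
    have := heq x y
    rw [← hG] at this
    nlinarith
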